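/- arXiv:2308.03187 — 3 statements merged into one kernel-verified Lean document; each statement's English description precedes it below -/
import Mathlib

section
/- The number of ⊗-irreducible partition diagrams of order 1 is 2, and the number of ⊗-irreducible partition diagrams of order 2 is 11. -/
open Finset

/-- A partition diagram of order `k`: a set partition (equivalence relation) on the
`2k`-element set `Fin k × Bool`, where `(i, true)` denotes the top node `i+1` and
`(i, false)` denotes the bottom node `(i+1)'`. -/
abbrev DiagramOn (k : ℕ) := Setoid (Fin k × Bool)

/-- A partition diagram of arbitrary order. -/
abbrev Diagram := Σ k : ℕ, DiagramOn k

/-- The disjoint sum of two set partitions. -/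
def sumSetoid {α β : Type*} (s : Setoid α) (t : Setoid β) : Setoid (α ⊕ β) where
  r x y :=
    match x, y with
    | .inl a, .inl b => s.r a b
    | .inr a, .inr b => t.r a b
    | _, _ => False
  iseqv := by
    refine ⟨?_, ?_, ?_⟩
    · rintro (a | a)
      · exact s.iseqv.refl a
      · exact t.iseqv.refl a
    · rintro (a | a) (b | b) h
      · exact s.iseqv.symm h
      · exact h.elim
      · exact h.elim
      · exact t.iseqv.symm h
    · rintro (a | a) (b | b) (c | c) h₁ h₂ <;>
        first
          | exact s.iseqv.trans h₁ h₂
          | exact t.iseqv.trans h₁ h₂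
          | exact h₁.elim
          | exact h₂.elim

/-- The relabeling identifying the nodes of two concatenated diagrams of orders `j`, `m`
with the nodes of a diagram of order `j + m`. -/
def concatEquiv (j m : ℕ) : (Fin j × Bool) ⊕ (Fin m × Bool) ≃ Fin (j + m) × Bool :=
  (Equiv.sumProdDistrib (Fin j) (Fin m) Bool).symm.trans
    (Equiv.prodCongr finSumFinEquiv (Equiv.refl Bool))

/-- Horizontal concatenation of partition diagrams. -/
def concatOn {j m : ℕ} (s : DiagramOn j) (t : DiagramOn m) : DiagramOn (j + m) :=
  Setoid.comap (concatEquiv j m).symm (sumSetoid s t)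

/-- Horizontal concatenation `⊗` of diagrams of arbitrary orders. -/
def Diagram.concat (d₁ d₂ : Diagram) : Diagram :=
  ⟨d₁.1 + d₂.1, concatOn d₁.2 d₂.2⟩

/-- A nonempty diagram is `⊗`-irreducible if it is not the concatenation of two
nonempty diagrams. -/
def Diagram.Irr (d : Diagram) : Prop :=
  d.1 ≠ 0 ∧ ¬ ∃ d₁ d₂ : Diagram, d₁.1 ≠ 0 ∧ d₂.1 ≠ 0 ∧ d = d₁.concat d₂

/-- The Bell number: the number of set partitions of an `m`-element set. -/
noncomputable def bell (m : ℕ) : ℕ := Nat.card (Setoid (Fin m))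

/-- The smallest equivalence relation containing `s` and relating `a` with `b`
(merging the blocks of `a` and `b`). -/
def joinTwo {X : Type*} (s : Setoid X) (a b : X) : Setoid X :=
  s ⊔ Relation.EqvGen.setoid (fun x y => x = a ∧ y = b)

/-- The near-concatenation `•` of partition diagrams: concatenate, then merge the block
of the bottom-right node of the first diagram with the block of the bottom-left node of
the second diagram.  By convention `∅ • ρ = ρ` and `π • ∅ = π`. -/
def Diagram.bullet (d₁ d₂ : Diagram) : Diagram :=
  if h₁ : d₁.1 = 0 then d₂
  else if h₂ : d₂.1 = 0 then d₁
  else ⟨d₁.1 + d₂.1,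
    joinTwo (concatOn d₁.2 d₂.2)
      (⟨d₁.1 - 1, by omega⟩, false) (⟨d₁.1, by omega⟩, false)⟩

/-- The `⊗`-product of a list of diagrams (empty diagram for the empty list). -/
def Diagram.listConcat : List Diagram → Diagram
  | [] => ⟨0, ⊥⟩
  | d :: l => l.foldl Diagram.concat d

/-- The `•`-product of a list of diagrams (empty diagram for the empty list). -/
def Diagram.listBullet : List Diagram → Diagram
  | [] => ⟨0, ⊥⟩
  | d :: l => l.foldl Diagram.bullet d

/-- The number of `⊗`-irreducible partition diagrams of order `k`. -/
noncomputable def irrCount (k : ℕ) : ℕ := Nat.card {s : DiagramOn k // Diagram.Irr ⟨k, s⟩}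

/-! ### Auxiliary machinery -/

/-- Idempotent, decreasing functions: canonical representatives of setoids on `Fin n`. -/
def Pfun {n : ℕ} (f : Fin n → Fin n) : Prop := (∀ x, f (f x) = f x) ∧ ∀ x, f x ≤ x

instance Pfun.dec {n : ℕ} : DecidablePred (Pfun (n := n)) := fun _ =>
  inferInstanceAs (Decidable (_ ∧ _))

open scoped Classical in
/-- The minimum of the class of `x`. -/
noncomputable def smin {n : ℕ} (s : Setoid (Fin n)) (x : Fin n) : Fin n :=
  (Finset.univ.filter fun y => s.r y x).min'
    ⟨x, Finset.mem_filter.mpr ⟨Finset.mem_univ x, s.iseqv.refl x⟩⟩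

open scoped Classical in
lemma smin_rel {n : ℕ} (s : Setoid (Fin n)) (x : Fin n) : s.r (smin s x) x := by
  have h := Finset.min'_mem (Finset.univ.filter fun y => s.r y x)
    ⟨x, Finset.mem_filter.mpr ⟨Finset.mem_univ x, s.iseqv.refl x⟩⟩
  exact (Finset.mem_filter.mp h).2

open scoped Classical in
lemma smin_le' {n : ℕ} (s : Setoid (Fin n)) {x w : Fin n} (h : s.r w x) :
    smin s x ≤ w :=
  Finset.min'_le (Finset.univ.filter fun y => s.r y x) w
    (Finset.mem_filter.mpr ⟨Finset.mem_univ w, h⟩)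

lemma smin_le {n : ℕ} (s : Setoid (Fin n)) (x : Fin n) : smin s x ≤ x :=
  smin_le' s (s.iseqv.refl x)

lemma rel_smin_eq {n : ℕ} (s : Setoid (Fin n)) {x y : Fin n} (h : s.r x y) :
    smin s x = smin s y :=
  le_antisymm (smin_le' s (s.iseqv.trans (smin_rel s y) (s.iseqv.symm h)))
    (smin_le' s (s.iseqv.trans (smin_rel s x) h))

lemma rel_iff_smin {n : ℕ} (s : Setoid (Fin n)) (x y : Fin n) :
    s.r x y ↔ smin s x = smin s y := by
  constructor
  · exact rel_smin_eq s
  · intro h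
    exact s.iseqv.trans (s.iseqv.symm (smin_rel s x)) (h ▸ smin_rel s y)

lemma smin_idem {n : ℕ} (s : Setoid (Fin n)) (x : Fin n) :
    smin s (smin s x) = smin s x :=
  rel_smin_eq s (smin_rel s x)

lemma smin_ker {n : ℕ} (f : Fin n → Fin n) (hf : Pfun f) (x : Fin n) :
    smin (Setoid.ker f) x = f x := by
  have h1 : (Setoid.ker f).r (f x) x := hf.1 x
  refine le_antisymm (smin_le' _ h1) ?_
  have h2 : (Setoid.ker f).r (smin (Setoid.ker f) x) x := smin_rel _ x
  have h3 : f x = f (smin (Setoid.ker f) x) := h2.symm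
  calc f x = f (smin (Setoid.ker f) x) := h3
    _ ≤ smin (Setoid.ker f) x := hf.2 _

/-- Setoids on `Fin n` correspond to idempotent decreasing functions. -/
noncomputable def setoidEquivPfun (n : ℕ) :
    Setoid (Fin n) ≃ {f : Fin n → Fin n // Pfun f} where
  toFun s := ⟨smin s, fun x => smin_idem s x, fun x => smin_le s x⟩
  invFun f := Setoid.ker f.1
  left_inv s := Setoid.ext fun x y => by
    change smin s x = smin s y ↔ s.r x y
    exact (rel_iff_smin s x y).symm
  right_inv f := Subtype.ext (funext fun x => smin_ker f.1 f.2 x)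

/-- Transport of setoids along an equivalence of types. -/
def setoidCongr {α β : Type*} (e : α ≃ β) : Setoid β ≃ Setoid α where
  toFun s := s.comap e
  invFun s := s.comap e.symm
  left_inv s := Setoid.ext fun x y => by
    change s.r (e (e.symm x)) (e (e.symm y)) ↔ s.r x y
    simp
  right_inv s := Setoid.ext fun x y => by
    change s.r (e.symm (e x)) (e.symm (e y)) ↔ s.r x y
    simp

/-- Concrete equivalence `Fin k × Bool ≃ Fin (k * 2)`. -/
def eb (k : ℕ) : Fin k × Bool ≃ Fin (k * 2) :=
  ((Equiv.refl (Fin k)).prodCongr finTwoEquiv.symm).trans finProdFinEquiv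

/-- The master equivalence for diagrams of order `k`. -/
noncomputable def Ek (k : ℕ) :
    DiagramOn k ≃ {f : Fin (k * 2) → Fin (k * 2) // Pfun f} :=
  (setoidCongr (eb k).symm).trans (setoidEquivPfun (k * 2))

lemma Ek_symm_rel (k : ℕ) (F : {f : Fin (k * 2) → Fin (k * 2) // Pfun f})
    (x y : Fin k × Bool) :
    ((Ek k).symm F).r x y ↔ F.1 (eb k x) = F.1 (eb k y) := by
  change (Setoid.ker F.1).r ((eb k).symm.symm x) ((eb k).symm.symm y) ↔ _
  simp only [Equiv.symm_symm]
  exact Iff.rfl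

/-- Concrete (boolean) form of the concatenation relation of two order-1 diagrams. -/
def crelB (g h : Fin 2 → Fin 2) (x y : Fin 2 × Bool) : Bool :=
  match (concatEquiv 1 1).symm x, (concatEquiv 1 1).symm y with
  | Sum.inl a, Sum.inl b => g (eb 1 a) == g (eb 1 b)
  | Sum.inr a, Sum.inr b => h (eb 1 a) == h (eb 1 b)
  | _, _ => false

lemma concatOn_rel_crelB (G H : {f : Fin (1 * 2) → Fin (1 * 2) // Pfun f})
    (x y : Fin 2 × Bool) :
    (concatOn ((Ek 1).symm G) ((Ek 1).symm H)).r x y ↔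
      crelB G.1 H.1 x y = true := by
  change (sumSetoid ((Ek 1).symm G) ((Ek 1).symm H)).r
      ((concatEquiv 1 1).symm x) ((concatEquiv 1 1).symm y) ↔ _
  rcases hx : (concatEquiv 1 1).symm x with a | a <;>
    rcases hy : (concatEquiv 1 1).symm y with b | b <;>
      simp only [sumSetoid, crelB, hx, hy] <;>
    simp [Ek_symm_rel, beq_iff_eq]
  · exact Iff.rfl
  · exact id
  · exact id
  · exact Iff.rfl

/-- Decidable reducibility condition on the function side. -/
def RedF (f : Fin (2 * 2) → Fin (2 * 2)) : Prop :=
  ∃ g h : Fin (1 * 2) → Fin (1 * 2), Pfun g ∧ Pfun h ∧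
    ∀ x y : Fin 2 × Bool, (f (eb 2 x) = f (eb 2 y)) ↔ crelB g h x y = true

instance RedF.dec : DecidablePred RedF := fun f => by
  unfold RedF; infer_instance

lemma irr_one (s : DiagramOn 1) : Diagram.Irr ⟨1, s⟩ := by
  refine ⟨one_ne_zero, ?_⟩
  rintro ⟨d₁, d₂, h1, h2, heq⟩
  have : (1 : ℕ) = d₁.1 + d₂.1 := congrArg Sigma.fst heq
  omega

lemma irr_two_iff (s : DiagramOn 2) :
    Diagram.Irr ⟨2, s⟩ ↔ ¬ ∃ t u : DiagramOn 1, s = concatOn t u := by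
  unfold Diagram.Irr
  simp only [ne_eq, OfNat.ofNat_ne_zero, not_false_eq_true, true_and]
  constructor
  · intro hnot ⟨t, u, hs⟩
    refine hnot ⟨⟨1, t⟩, ⟨1, u⟩, one_ne_zero, one_ne_zero, ?_⟩
    subst hs; rfl
  · rintro hnot ⟨⟨j, t⟩, ⟨m, u⟩, h1, h2, heq⟩
    have hjm : (2 : ℕ) = j + m := congrArg Sigma.fst heq
    have h1' : j ≠ 0 := h1
    have h2' : m ≠ 0 := h2
    have hj : j = 1 := by omega
    have hm : m = 1 := by omega
    subst hj; subst hm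
    exact hnot ⟨t, u, eq_of_heq (Sigma.mk.inj_iff.mp heq).2⟩

lemma irr_two_iff_redF (s : DiagramOn 2) :
    Diagram.Irr ⟨2, s⟩ ↔ ¬ RedF ((Ek 2) s).1 := by
  rw [irr_two_iff]
  apply not_congr
  constructor
  · rintro ⟨t, u, hs⟩
    refine ⟨((Ek 1) t).1, ((Ek 1) u).1, ((Ek 1) t).2, ((Ek 1) u).2, fun x y => ?_⟩
    have hF : ((Ek 2).symm ((Ek 2) s)).r x y ↔ ((Ek 2) s).1 (eb 2 x) = ((Ek 2) s).1 (eb 2 y) :=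
      Ek_symm_rel 2 _ x y
    rw [Equiv.symm_apply_apply] at hF
    rw [← hF, hs]
    have := concatOn_rel_crelB ((Ek 1) t) ((Ek 1) u) x y
    rw [Equiv.symm_apply_apply, Equiv.symm_apply_apply] at this
    exact this
  · rintro ⟨g, h, hg, hh, hiff⟩
    refine ⟨(Ek 1).symm ⟨g, hg⟩, (Ek 1).symm ⟨h, hh⟩, Setoid.ext fun x y => ?_⟩
    have hF : ((Ek 2).symm ((Ek 2) s)).r x y ↔ ((Ek 2) s).1 (eb 2 x) = ((Ek 2) s).1 (eb 2 y) :=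
      Ek_symm_rel 2 _ x y
    rw [Equiv.symm_apply_apply] at hF
    rw [hF, hiff x y]
    exact (concatOn_rel_crelB ⟨g, hg⟩ ⟨h, hh⟩ x y).symm

/-- There are `2` irreducible diagrams of order `1` and `11` of order `2`. -/
theorem irrCount_one_two : irrCount 1 = 2 ∧ irrCount 2 = 11 := by
  constructor
  · have e : {s : DiagramOn 1 // Diagram.Irr ⟨1, s⟩} ≃
        {f : Fin (1 * 2) → Fin (1 * 2) // Pfun f} :=
      (Equiv.subtypeUnivEquiv irr_one).trans (Ek 1)
    rw [irrCount, Nat.card_congr e, Nat.card_eq_fintype_card]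
    decide
  · have e : {s : DiagramOn 2 // Diagram.Irr ⟨2, s⟩} ≃
        {F : {f : Fin (2 * 2) → Fin (2 * 2) // Pfun f} // ¬ RedF F.1} :=
      (Ek 2).subtypeEquiv fun s => irr_two_iff_redF s
    rw [irrCount, Nat.card_congr e, Nat.card_eq_fintype_card]
    decide
end

section
/- For partition diagrams ρ and π, the diagram ρ • π is ⊗-irreducible if and only if both ρ and π are ⊗-irreducible. -/
open Finset

section AuxProof

open Sum

/-- AUX: image of a left node under the concatenation relabeling. -/
lemma concatEquiv_inl' {j m : ℕ} (a : Fin j) (b : Bool) :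
    concatEquiv j m (.inl (a, b)) = (Fin.castAdd m a, b) := by
  simp [concatEquiv]

/-- AUX: image of a right node under the concatenation relabeling. -/
lemma concatEquiv_inr' {j m : ℕ} (a : Fin m) (b : Bool) :
    concatEquiv j m (.inr (a, b)) = (Fin.natAdd j a, b) := by
  simp [concatEquiv]

lemma concatEquiv_symm_left {j m : ℕ} (q : Fin (j + m) × Bool) (h : q.1.1 < j) :
    (concatEquiv j m).symm q = .inl ((⟨q.1.1, h⟩ : Fin j), q.2) := by
  rw [Equiv.symm_apply_eq, concatEquiv_inl']
  obtain ⟨⟨v, hv⟩, b⟩ := q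
  rfl

lemma concatEquiv_symm_right {j m : ℕ} (q : Fin (j + m) × Bool) (h : j ≤ q.1.1) :
    (concatEquiv j m).symm q =
      .inr ((⟨q.1.1 - j, by have := q.1.isLt; omega⟩ : Fin m), q.2) := by
  rw [Equiv.symm_apply_eq, concatEquiv_inr']
  obtain ⟨⟨v, hv⟩, b⟩ := q
  refine Prod.ext ?_ rfl
  apply Fin.ext
  simp only [Fin.natAdd]
  simp at h ⊢
  omega

lemma concatEquiv_apply_inl_of_lt {j m : ℕ} (q : Fin (j + m) × Bool) (h : q.1.1 < j) :
    concatEquiv j m (.inl ((⟨q.1.1, h⟩ : Fin j), q.2)) = q := by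
  rw [← concatEquiv_symm_left q h, Equiv.apply_symm_apply]

lemma concatEquiv_apply_inr_of_le {j m : ℕ} (q : Fin (j + m) × Bool) (h : j ≤ q.1.1) :
    concatEquiv j m (.inr ((⟨q.1.1 - j, by have := q.1.isLt; omega⟩ : Fin m), q.2)) = q := by
  rw [← concatEquiv_symm_right q h, Equiv.apply_symm_apply]

lemma concatOn_rel {j m : ℕ} (s : DiagramOn j) (t : DiagramOn m) (x y : Fin (j + m) × Bool) :
    (concatOn s t).r x y ↔
      (sumSetoid s t).r ((concatEquiv j m).symm x) ((concatEquiv j m).symm y) :=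
  Iff.rfl

lemma sumSetoid_inl_inl {α β : Type*} (s : Setoid α) (t : Setoid β) (a b : α) :
    (sumSetoid s t).r (.inl a) (.inl b) ↔ s.r a b := Iff.rfl

lemma sumSetoid_inr_inr {α β : Type*} (s : Setoid α) (t : Setoid β) (a b : β) :
    (sumSetoid s t).r (.inr a) (.inr b) ↔ t.r a b := Iff.rfl

lemma sumSetoid_inl_inr {α β : Type*} (s : Setoid α) (t : Setoid β) (a : α) (b : β) :
    (sumSetoid s t).r (.inl a) (.inr b) ↔ False := Iff.rfl

lemma sumSetoid_inr_inl {α β : Type*} (s : Setoid α) (t : Setoid β) (a : β) (b : α) :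
    (sumSetoid s t).r (.inr a) (.inl b) ↔ False := Iff.rfl

/-- AUX: the explicit description of `joinTwo`. -/
def mergeSetoid {X : Type*} (s : Setoid X) (a b : X) : Setoid X where
  r x y := s.r x y ∨ (s.r x a ∧ s.r b y) ∨ (s.r x b ∧ s.r a y)
  iseqv := by
    constructor
    · intro x; exact Or.inl (s.refl x)
    · rintro x y (h | ⟨h1, h2⟩ | ⟨h1, h2⟩)
      · exact Or.inl (s.symm h)
      · exact Or.inr (Or.inr ⟨s.symm h2, s.symm h1⟩)
      · exact Or.inr (Or.inl ⟨s.symm h2, s.symm h1⟩)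
    · rintro x y z (h | ⟨h1, h2⟩ | ⟨h1, h2⟩) (g | ⟨g1, g2⟩ | ⟨g1, g2⟩)
      · exact Or.inl (s.trans h g)
      · exact Or.inr (Or.inl ⟨s.trans h g1, g2⟩)
      · exact Or.inr (Or.inr ⟨s.trans h g1, g2⟩)
      · exact Or.inr (Or.inl ⟨h1, s.trans h2 g⟩)
      · exact Or.inr (Or.inr ⟨s.trans h1 (s.symm (s.trans h2 g1)),
          s.trans (s.symm (s.trans h2 g1)) g2⟩)
      · exact Or.inl (s.trans h1 g2)
      · exact Or.inr (Or.inr ⟨h1, s.trans h2 g⟩)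
      · exact Or.inl (s.trans h1 g2)
      · exact Or.inr (Or.inl ⟨s.trans h1 (s.symm (s.trans h2 g1)),
          s.trans (s.symm (s.trans h2 g1)) g2⟩)

lemma joinTwo_eq {X : Type*} (s : Setoid X) (a b : X) :
    joinTwo s a b = mergeSetoid s a b := by
  apply le_antisymm
  · apply sup_le
    · intro x y h
      exact Or.inl h
    · apply Setoid.eqvGen_le
      rintro x y ⟨rfl, rfl⟩
      exact Or.inr (Or.inl ⟨s.refl x, s.refl y⟩)
  · have hs : s ≤ joinTwo s a b := le_sup_left
    have hab : (joinTwo s a b).r a b := by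
      have : (Relation.EqvGen.setoid fun x y => x = a ∧ y = b) ≤ joinTwo s a b := le_sup_right
      exact this (Relation.EqvGen.rel a b ⟨rfl, rfl⟩)
    rintro x y (h | ⟨h1, h2⟩ | ⟨h1, h2⟩)
    · exact hs h
    · exact (joinTwo s a b).trans (hs h1) ((joinTwo s a b).trans hab (hs h2))
    · exact (joinTwo s a b).trans (hs h1)
        ((joinTwo s a b).trans ((joinTwo s a b).symm hab) (hs h2))

lemma joinTwo_rel {X : Type*} (s : Setoid X) (a b x y : X) :
    (joinTwo s a b).r x y ↔ s.r x y ∨ (s.r x a ∧ s.r b y) ∨ (s.r x b ∧ s.r a y) := by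
  rw [joinTwo_eq]; rfl

/-- AUX: a set partition crosses the cut at position `c`. -/
def Crosses {k : ℕ} (s : DiagramOn k) (c : ℕ) : Prop :=
  ∃ x y : Fin k × Bool, s.r x y ∧ x.1.1 < c ∧ c ≤ y.1.1

lemma crosses_concat_left {j m : ℕ} (s : DiagramOn j) (t : DiagramOn m) {c : ℕ} (hc : c ≤ j) :
    Crosses (concatOn s t) c ↔ Crosses s c := by
  constructor
  · rintro ⟨x, y, hr, hx, hy⟩
    have hxl : x.1.1 < j := lt_of_lt_of_le hx hc
    rw [concatOn_rel, concatEquiv_symm_left x hxl] at hr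
    by_cases hyl : y.1.1 < j
    · rw [concatEquiv_symm_left y hyl] at hr
      exact ⟨_, _, hr, hx, hy⟩
    · rw [concatEquiv_symm_right y (le_of_not_gt hyl)] at hr
      exact hr.elim
  · rintro ⟨x, y, hr, hx, hy⟩
    have hxl : x.1.1 < j := hx.trans_le hc
    have hyl : y.1.1 < j := y.1.isLt
    refine ⟨concatEquiv j m (.inl x), concatEquiv j m (.inl y), ?_, ?_, ?_⟩
    · rw [concatOn_rel, Equiv.symm_apply_apply, Equiv.symm_apply_apply]
      exact hr
    · obtain ⟨a, b⟩ := x; rw [concatEquiv_inl']; simpa using hx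
    · obtain ⟨a, b⟩ := y; rw [concatEquiv_inl']; simpa using hy

lemma crosses_concat_right {j m : ℕ} (s : DiagramOn j) (t : DiagramOn m) {c : ℕ} (hc : j ≤ c) :
    Crosses (concatOn s t) c ↔ Crosses t (c - j) := by
  constructor
  · rintro ⟨x, y, hr, hx, hy⟩
    have hyr : j ≤ y.1.1 := hc.trans hy
    rw [concatOn_rel, concatEquiv_symm_right y hyr] at hr
    by_cases hxl : x.1.1 < j
    · rw [concatEquiv_symm_left x hxl] at hr
      exact hr.elim
    · rw [concatEquiv_symm_right x (le_of_not_gt hxl)] at hr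
      exact ⟨_, _, hr, by simp; omega, by simp; omega⟩
  · rintro ⟨x, y, hr, hx, hy⟩
    refine ⟨concatEquiv j m (.inr x), concatEquiv j m (.inr y), ?_, ?_, ?_⟩
    · rw [concatOn_rel, Equiv.symm_apply_apply, Equiv.symm_apply_apply]
      exact hr
    · obtain ⟨a, b⟩ := x; rw [concatEquiv_inr']; simp at hx ⊢; omega
    · obtain ⟨a, b⟩ := y; rw [concatEquiv_inr']; simp at hy ⊢; omega

/-- AUX: irreducibility is equivalent to every internal cut being crossed. -/
lemma irr_iff_crosses {k : ℕ} (s : DiagramOn k) (hk : k ≠ 0) :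
    Diagram.Irr ⟨k, s⟩ ↔ ∀ c, 0 < c → c < k → Crosses s c := by
  constructor
  · intro h c hc1 hc2
    by_contra hcr
    obtain ⟨m, rfl⟩ : ∃ m, k = c + m := ⟨k - c, by omega⟩
    set s₁ : DiagramOn c := Setoid.comap (fun p => concatEquiv c m (.inl p)) s with hs₁
    set s₂ : DiagramOn m := Setoid.comap (fun p => concatEquiv c m (.inr p)) s with hs₂
    refine h.2 ⟨⟨c, s₁⟩, ⟨m, s₂⟩, (by show c ≠ 0; omega), (by show m ≠ 0; omega), ?_⟩
    show (⟨c + m, s⟩ : Diagram) = ⟨c + m, concatOn s₁ s₂⟩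
    have hs : s = concatOn s₁ s₂ := by
      apply Setoid.ext
      intro x y
      show s.r x y ↔ (concatOn s₁ s₂).r x y
      rw [concatOn_rel]
      by_cases hx : x.1.1 < c <;> by_cases hy : y.1.1 < c
      · rw [concatEquiv_symm_left x hx, concatEquiv_symm_left y hy, sumSetoid_inl_inl]
        show s.r x y ↔ s.r (concatEquiv c m (.inl _)) (concatEquiv c m (.inl _))
        rw [concatEquiv_apply_inl_of_lt x hx, concatEquiv_apply_inl_of_lt y hy]
      · rw [concatEquiv_symm_left x hx, concatEquiv_symm_right y (by omega),
          sumSetoid_inl_inr, iff_false]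
        intro hxy
        exact hcr ⟨x, y, hxy, hx, by omega⟩
      · rw [concatEquiv_symm_right x (by omega), concatEquiv_symm_left y hy,
          sumSetoid_inr_inl, iff_false]
        intro hxy
        exact hcr ⟨y, x, s.symm hxy, hy, by omega⟩
      · rw [concatEquiv_symm_right x (by omega), concatEquiv_symm_right y (by omega),
          sumSetoid_inr_inr]
        show s.r x y ↔ s.r (concatEquiv c m (.inr _)) (concatEquiv c m (.inr _))
        rw [concatEquiv_apply_inr_of_le x (by omega), concatEquiv_apply_inr_of_le y (by omega)]
    exact congrArg (fun z => (⟨c + m, z⟩ : Diagram)) hs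
  · intro h
    refine ⟨hk, ?_⟩
    rintro ⟨⟨j, s₁⟩, ⟨m', s₂⟩, h1, h2, heq⟩
    replace h1 : j ≠ 0 := h1
    replace h2 : m' ≠ 0 := h2
    simp only [Diagram.concat] at heq
    obtain ⟨hfst, hsnd⟩ := Sigma.mk.inj_iff.mp heq
    subst hfst
    rw [heq_iff_eq] at hsnd
    obtain ⟨x, y, hr, hx, hy⟩ := h j (by omega) (by omega)
    rw [hsnd, concatOn_rel, concatEquiv_symm_left x hx,
      concatEquiv_symm_right y hy] at hr
    exact hr

end AuxProof

section MainAux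

lemma bullet_eq {j m : ℕ} (s : DiagramOn j) (t : DiagramOn m) (hj : j ≠ 0) (hm : m ≠ 0) :
    Diagram.bullet ⟨j, s⟩ ⟨m, t⟩ =
      (⟨j + m, joinTwo (concatOn s t) (⟨j - 1, by omega⟩, false) (⟨j, by omega⟩, false)⟩ : Diagram) := by
  unfold Diagram.bullet
  rw [dif_neg hj, dif_neg hm]

lemma crosses_bullet_lt {j m : ℕ} (s : DiagramOn j) (t : DiagramOn m)
    (hj : j ≠ 0) (hm : m ≠ 0) {c : ℕ} (hc0 : 0 < c) (hcj : c < j) :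
    Crosses (joinTwo (concatOn s t)
      ((⟨j - 1, by omega⟩ : Fin (j + m)), false) ((⟨j, by omega⟩ : Fin (j + m)), false)) c ↔
      Crosses s c := by
  constructor
  · rintro ⟨x, y, hr, hx, hy⟩
    rw [joinTwo_rel] at hr
    have key : Crosses (concatOn s t) c := by
      rcases hr with h | ⟨h1, h2⟩ | ⟨h1, h2⟩
      · exact ⟨x, y, h, hx, hy⟩
      · exact ⟨x, _, h1, hx, by simp; omega⟩
      · exact ⟨x, _, h1, hx, by simp; omega⟩
    exact (crosses_concat_left s t hcj.le).mp key
  · intro h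
    obtain ⟨x, y, hr, hx, hy⟩ := (crosses_concat_left s t hcj.le).mpr h
    exact ⟨x, y, (joinTwo_rel _ _ _ _ _).mpr (Or.inl hr), hx, hy⟩

lemma crosses_bullet_gt {j m : ℕ} (s : DiagramOn j) (t : DiagramOn m)
    (hj : j ≠ 0) (hm : m ≠ 0) {c : ℕ} (hjc : j < c) (hc : c < j + m) :
    Crosses (joinTwo (concatOn s t)
      ((⟨j - 1, by omega⟩ : Fin (j + m)), false) ((⟨j, by omega⟩ : Fin (j + m)), false)) c ↔
      Crosses t (c - j) := by
  constructor
  · rintro ⟨x, y, hr, hx, hy⟩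
    rw [joinTwo_rel] at hr
    have key : Crosses (concatOn s t) c := by
      rcases hr with h | ⟨h1, h2⟩ | ⟨h1, h2⟩
      · exact ⟨x, y, h, hx, hy⟩
      · exact ⟨_, y, h2, by simp; omega, hy⟩
      · exact ⟨_, y, h2, by simp; omega, hy⟩
    exact (crosses_concat_right s t hjc.le).mp key
  · intro h
    obtain ⟨x, y, hr, hx, hy⟩ := (crosses_concat_right s t hjc.le).mpr h
    exact ⟨x, y, (joinTwo_rel _ _ _ _ _).mpr (Or.inl hr), hx, hy⟩

end MainAux

/-- For (nonempty) partition diagrams `ρ` and `π`, `ρ • π` is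
`⊗`-irreducible if and only if both `ρ` and `π` are `⊗`-irreducible. -/
theorem bullet_irreducible_iff (ρ π : Diagram) (hρ : ρ.1 ≠ 0) (hπ : π.1 ≠ 0) :
    (ρ.bullet π).Irr ↔ ρ.Irr ∧ π.Irr := by
  obtain ⟨j, s⟩ := ρ
  obtain ⟨m, t⟩ := π
  simp only at hρ hπ
  rw [bullet_eq s t hρ hπ, irr_iff_crosses _ (by omega), irr_iff_crosses _ hρ,
    irr_iff_crosses _ hπ]
  constructor
  · intro h
    constructor
    · intro c hc0 hcj
      exact (crosses_bullet_lt s t hρ hπ hc0 hcj).mp (h c hc0 (by omega))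
    · intro c hc0 hcm
      have := (crosses_bullet_gt s t hρ hπ (show j < j + c by omega)
        (show j + c < j + m by omega)).mp (h (j + c) (by omega) (by omega))
      simpa using this
  · rintro ⟨h1, h2⟩ c hc0 hc
    rcases lt_trichotomy c j with h | rfl | h
    · exact (crosses_bullet_lt s t hρ hπ hc0 h).mpr (h1 c hc0 h)
    · refine ⟨(⟨c - 1, by omega⟩, false), (⟨c, by omega⟩, false),
        (joinTwo_rel _ _ _ _ _).mpr (Or.inr (Or.inl ⟨(concatOn s t).refl _, (concatOn s t).refl _⟩)), ?_, ?_⟩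
      · simp; omega
      · simp
    · exact (crosses_bullet_gt s t hρ hπ h hc).mpr (h2 (c - j) (by omega) (by omega))
end

section
/- For a permutation diagram π = {{1, p(1)'}, {2, p(2)'}, ..., {k, p(k)'}} associated with a permutation p of {1,...,k}, π is •-primitive: it cannot be written as ρ⁽¹⁾ • ρ⁽²⁾ for nonempty partition diagrams ρ⁽¹⁾ and ρ⁽²⁾. -/
open Finset

/-- The permutation diagram of `p`: the partition of `{1,…,k,1',…,k'}` into the blocks
`{i, p(i)'}` for `i = 1, …, k`. -/
def permSetoid {k : ℕ} (p : Equiv.Perm (Fin k)) : DiagramOn k :=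
  Relation.EqvGen.setoid (fun x y => x.2 = true ∧ y.2 = false ∧ y.1 = p x.1)

lemma permEqvGen_cases {k : ℕ} (p : Equiv.Perm (Fin k)) {x y : Fin k × Bool}
    (h : Relation.EqvGen (fun x y : Fin k × Bool =>
      x.2 = true ∧ y.2 = false ∧ y.1 = p x.1) x y) :
    x = y ∨ (x.2 = true ∧ y.2 = false ∧ y.1 = p x.1) ∨
      (y.2 = true ∧ x.2 = false ∧ x.1 = p y.1) := by
  induction h with
  | rel a b h => exact Or.inr (Or.inl h)
  | refl a => exact Or.inl rfl
  | symm a b _ ih => tauto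
  | trans a b c _ _ ih1 ih2 =>
    rcases ih1 with rfl | ⟨h1, h2, h3⟩ | ⟨h1, h2, h3⟩ <;>
      rcases ih2 with rfl | ⟨g1, g2, g3⟩ | ⟨g1, g2, g3⟩ <;>
      simp_all [Prod.ext_iff]

/-- Every permutation diagram is `•`-primitive. -/
theorem permDiagram_bullet_primitive (k : ℕ) (p : Equiv.Perm (Fin k)) :
    ¬ ∃ ρ₁ ρ₂ : Diagram, ρ₁.1 ≠ 0 ∧ ρ₂.1 ≠ 0 ∧
      (⟨k, permSetoid p⟩ : Diagram) = ρ₁.bullet ρ₂ := by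
  rintro ⟨⟨j, s⟩, ⟨m, t⟩, h1, h2, heq⟩
  simp only [Diagram.bullet, dif_neg h1, dif_neg h2] at heq h1 h2
  obtain ⟨hk, hst⟩ := Sigma.mk.inj_iff.mp heq
  subst hk
  rw [heq_iff_eq] at hst
  set a : Fin (j + m) × Bool := (⟨j - 1, by omega⟩, false) with ha
  set b : Fin (j + m) × Bool := (⟨j, by omega⟩, false) with hb
  have hr : (joinTwo (concatOn s t) a b).r a b := by
    have : (Relation.EqvGen.setoid
        (fun x y : Fin (j + m) × Bool => x = a ∧ y = b)).r a b :=
      Relation.EqvGen.rel a b ⟨rfl, rfl⟩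
    exact (le_sup_right (a := concatOn s t)) this
  rw [← hst] at hr
  rcases permEqvGen_cases p hr with h | ⟨h, _⟩ | ⟨h, _⟩
  · have : j - 1 = j := congrArg (fun z => (z.1 : ℕ)) h
    omega
  · simp [ha] at h
  · simp [hb] at h
end
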